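/- Let v₊ < 0 < v₋, and let μ₊, λ₊ be continuous nonnegative functions with support in [0, R₀]. Suppose γ₊ ≥ γ_cr⁺ where γ_cr⁺ = −v₊⁻¹ ∫₀^∞ λ₊(x) exp((1/v₊)∫₀ˣ μ₊)dx. Then the stationary density ρ₊(r) = exp(−(1/v₊)∫₀ʳ μ₊)(γ₊ + v₊⁻¹∫₀ʳ λ₊(x)exp((1/v₊)∫₀ˣ μ₊)dx) satisfies ∫₀^∞ ρ₊(r) dr < ∞ if and only if γ₊ = γ_cr⁺. -/

import Mathlib

open Real MeasureTheory Set

/-- A continuous function vanishing beyond `R₀` has constant primitive past `R₀`. -/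
lemma primitive_const_after (f : ℝ → ℝ) (hf : Continuous f) (R₀ : ℝ)
    (hfs : ∀ x, R₀ < x → f x = 0) :
    ∀ r, R₀ ≤ r → (∫ x in (0:ℝ)..r, f x) = ∫ x in (0:ℝ)..R₀, f x := by
  intro r hr
  have hadd : (∫ x in (0:ℝ)..R₀, f x) + (∫ x in R₀..r, f x) = ∫ x in (0:ℝ)..r, f x :=
    intervalIntegral.integral_add_adjacent_intervals
      (hf.intervalIntegrable 0 R₀) (hf.intervalIntegrable R₀ r)
  have h0 : (∫ x in R₀..r, f x) = 0 := by
    rw [intervalIntegral.integral_of_le hr]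
    calc (∫ x in Ioc R₀ r, f x) = ∫ _x in Ioc R₀ r, (0:ℝ) :=
          setIntegral_congr_fun measurableSet_Ioc (fun x hx => hfs x hx.1)
      _ = 0 := by simp
  rw [← hadd, h0, add_zero]

/-- A stationary (+)-density with `γ₊ ≥ γ_cr⁺` has finite total mass
`∫₀^∞ ρ₊(r) dr < ∞` if and only if `γ₊ = γ_cr⁺`. -/
theorem plus_density_finite_mass_iff
    (vp vm R₀ : ℝ) (hvp : vp < 0) (hvm : 0 < vm) (hR₀ : 0 < R₀)
    (μp lp : ℝ → ℝ)
    (hμc : Continuous μp) (hlc : Continuous lp)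
    (hμ0 : ∀ r, 0 ≤ μp r) (hl0 : ∀ r, 0 ≤ lp r)
    (hμs : ∀ r, r ∉ Icc (0:ℝ) R₀ → μp r = 0)
    (hls : ∀ r, r ∉ Icc (0:ℝ) R₀ → lp r = 0)
    (γp : ℝ)
    (γcr : ℝ)
    (hγcr : γcr = -vp⁻¹ * ∫ x in Ioi (0:ℝ),
      lp x * Real.exp ((1 / vp) * ∫ y in (0:ℝ)..x, μp y))
    (hγ : γcr ≤ γp) :
    let ρ : ℝ → ℝ := fun r =>
      Real.exp (-(1 / vp) * ∫ x in (0:ℝ)..r, μp x) *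
        (γp + vp⁻¹ * ∫ x in (0:ℝ)..r,
          lp x * Real.exp ((1 / vp) * ∫ y in (0:ℝ)..x, μp y))
    IntegrableOn ρ (Ioi (0:ℝ)) ↔ γp = γcr := by
  intro ρ
  set F : ℝ → ℝ := fun r => ∫ x in (0:ℝ)..r, μp x with hF
  have hFc : Continuous F :=
    intervalIntegral.continuous_primitive (fun a b => hμc.intervalIntegrable a b) 0
  set g : ℝ → ℝ := fun x => lp x * Real.exp ((1 / vp) * F x) with hg
  have hgc : Continuous g := hlc.mul (Real.continuous_exp.comp (continuous_const.mul hFc))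
  have hgs : ∀ x, R₀ < x → g x = 0 := by
    intro x hx
    have : lp x = 0 := hls x (fun h => absurd h.2 (not_le.2 hx))
    simp [hg, this]
  have hμs' : ∀ x, R₀ < x → μp x = 0 := fun x hx =>
    hμs x (fun h => absurd h.2 (not_le.2 hx))
  set G : ℝ → ℝ := fun r => ∫ x in (0:ℝ)..r, g x with hG
  have hGc : Continuous G :=
    intervalIntegral.continuous_primitive (fun a b => hgc.intervalIntegrable a b) 0
  have hFconst : ∀ r, R₀ ≤ r → F r = F R₀ := primitive_const_after μp hμc R₀ hμs'
  have hGconst : ∀ r, R₀ ≤ r → G r = G R₀ := primitive_const_after g hgc R₀ hgs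
  -- the Ioi-integral equals the primitive at R₀
  have hgint1 : IntegrableOn g (Ioc 0 R₀) := hgc.integrableOn_Ioc
  have hgint2 : IntegrableOn g (Ioi R₀) := by
    rw [integrableOn_congr_fun (fun x (hx : x ∈ Ioi R₀) => hgs x hx) measurableSet_Ioi]
    exact integrableOn_zero
  have hIoi : (∫ x in Ioi (0:ℝ), g x) = G R₀ := by
    rw [← Ioc_union_Ioi_eq_Ioi hR₀.le,
      setIntegral_union (Ioc_disjoint_Ioi le_rfl) measurableSet_Ioi hgint1 hgint2]
    have h2 : (∫ x in Ioi R₀, g x) = 0 := by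
      calc (∫ x in Ioi R₀, g x) = ∫ _x in Ioi R₀, (0:ℝ) :=
            setIntegral_congr_fun measurableSet_Ioi (fun x hx => hgs x hx)
        _ = 0 := by simp
    rw [h2, add_zero, hG]
    exact (intervalIntegral.integral_of_le hR₀.le).symm
  have hγcr' : γcr = -vp⁻¹ * G R₀ := by rw [hγcr, hIoi]
  -- ρ is constant on [R₀, ∞)
  have hρ : ρ = fun r => Real.exp (-(1 / vp) * F r) * (γp + vp⁻¹ * G r) := rfl
  have hρconst : ∀ r, R₀ ≤ r →
      ρ r = Real.exp (-(1 / vp) * F R₀) * (γp - γcr) := by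
    intro r hr
    rw [hρ]
    simp only
    rw [hFconst r hr, hGconst r hr, hγcr']
    ring_nf
  constructor
  · intro h
    have h2 : IntegrableOn ρ (Ioi R₀) := h.mono_set (Ioi_subset_Ioi hR₀.le)
    have h3 : IntegrableOn (fun _ => Real.exp (-(1 / vp) * F R₀) * (γp - γcr)) (Ioi R₀) := by
      rw [← integrableOn_congr_fun
        (fun r (hr : r ∈ Ioi R₀) => hρconst r (le_of_lt hr)) measurableSet_Ioi]
      exact h2
    rcases (integrableOn_const_iff enorm_ne_top).1 h3 with hc | hc
    · have hne : Real.exp (-(1 / vp) * F R₀) ≠ 0 := Real.exp_ne_zero _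
      have : γp - γcr = 0 := by
        rcases mul_eq_zero.1 (enorm_eq_zero.1 hc) with h' | h'
        · exact absurd h' hne
        · exact h'
      linarith
    · rw [Real.volume_Ioi] at hc
      exact absurd hc (lt_irrefl _)
  · intro h
    have hc0 : ∀ r, R₀ ≤ r → ρ r = 0 := by
      intro r hr
      rw [hρconst r hr, h, sub_self, mul_zero]
    have h1 : IntegrableOn ρ (Ioc 0 R₀) := by
      have hρc : Continuous ρ := by
        rw [hρ]
        exact (Real.continuous_exp.comp (continuous_const.mul hFc)).mul
          (continuous_const.add (continuous_const.mul hGc))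
      exact hρc.integrableOn_Ioc
    have h2 : IntegrableOn ρ (Ioi R₀) := by
      rw [integrableOn_congr_fun (fun r (hr : r ∈ Ioi R₀) => hc0 r (le_of_lt hr))
        measurableSet_Ioi]
      exact integrableOn_zero
    rw [← Ioc_union_Ioi_eq_Ioi hR₀.le]
    exact h1.union h2
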